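/- For any discrete random variables X and Y, the Gács–Körner common information satisfies C_GK(X;Y) = H(Q*) where Q* is the maximal common random variable induced by the ergodic decomposition of p_{XY}, and I(X;Y) = H(Q*) + I(X;Y|Q*). -/

import Mathlib

open Finset

/-- A probability mass function on a finite sample space. -/
def IsPMF {Ω : Type*} [Fintype Ω] (p : Ω → ℝ) : Prop :=
  (∀ ω, 0 ≤ p ω) ∧ ∑ ω, p ω = 1

/-- Probability that the random variable `X` takes the value `x`. -/
noncomputable def pr {Ω 𝒳 : Type*} [Fintype Ω] [DecidableEq 𝒳]
    (p : Ω → ℝ) (X : Ω → 𝒳) (x : 𝒳) : ℝ :=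
  ∑ ω, if X ω = x then p ω else 0

/-- Shannon entropy (in bits) of the random variable `X` under `p`. -/
noncomputable def H {Ω 𝒳 : Type*} [Fintype Ω] [Fintype 𝒳] [DecidableEq 𝒳]
    (p : Ω → ℝ) (X : Ω → 𝒳) : ℝ :=
  -∑ x, pr p X x * Real.logb 2 (pr p X x)

/-- Conditional entropy `H(X|Y)`. -/
noncomputable def condH {Ω 𝒳 𝒴 : Type*} [Fintype Ω] [Fintype 𝒳] [DecidableEq 𝒳]
    [Fintype 𝒴] [DecidableEq 𝒴] (p : Ω → ℝ) (X : Ω → 𝒳) (Y : Ω → 𝒴) : ℝ :=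
  H p (fun ω => (X ω, Y ω)) - H p Y

/-- Mutual information `I(X;Y)`. -/
noncomputable def MI {Ω 𝒳 𝒴 : Type*} [Fintype Ω] [Fintype 𝒳] [DecidableEq 𝒳]
    [Fintype 𝒴] [DecidableEq 𝒴] (p : Ω → ℝ) (X : Ω → 𝒳) (Y : Ω → 𝒴) : ℝ :=
  H p X + H p Y - H p (fun ω => (X ω, Y ω))

/-- Conditional mutual information `I(X;Y|Z)`. -/
noncomputable def condMI {Ω 𝒳 𝒴 𝒵 : Type*} [Fintype Ω] [Fintype 𝒳] [DecidableEq 𝒳]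
    [Fintype 𝒴] [DecidableEq 𝒴] [Fintype 𝒵] [DecidableEq 𝒵]
    (p : Ω → ℝ) (X : Ω → 𝒳) (Y : Ω → 𝒴) (Z : Ω → 𝒵) : ℝ :=
  condH p X Z - condH p X (fun ω => (Y ω, Z ω))

section Aux
variable {Ω 𝒲 𝒵 : Type*} [Fintype Ω] [Fintype 𝒲] [DecidableEq 𝒲]
  [Fintype 𝒵] [DecidableEq 𝒵] {p : Ω → ℝ}

lemma pr_nonneg (h0 : ∀ ω, 0 ≤ p ω) (Z : Ω → 𝒵) (z : 𝒵) : 0 ≤ pr p Z z :=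
  Finset.sum_nonneg fun ω _ => by split <;> simp [h0 ω]

lemma le_pr (h0 : ∀ ω, 0 ≤ p ω) (Z : Ω → 𝒵) {ω : Ω} : p ω ≤ pr p Z (Z ω) := by
  have := Finset.single_le_sum (s := Finset.univ)
    (f := fun ω' => if Z ω' = Z ω then p ω' else 0)
    (fun ω' _ => by split <;> simp [h0 ω']) (Finset.mem_univ ω)
  simpa [pr] using this

lemma pr_eq_zero (h0 : ∀ ω, 0 ≤ p ω) {Z : Ω → 𝒵} {z : 𝒵} (h : pr p Z z = 0)
    {ω : Ω} (hω : Z ω = z) : p ω = 0 := by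
  have := (Finset.sum_eq_zero_iff_of_nonneg
    (f := fun ω' => if Z ω' = z then p ω' else 0) (s := Finset.univ)
    (fun ω' _ => by split <;> simp [h0 ω'])).1 h ω (Finset.mem_univ ω)
  simpa [hω] using this

lemma pr_marginal_snd (W : Ω → 𝒲) (Z : Ω → 𝒵) (z : 𝒵) :
    pr p Z z = ∑ w, pr p (fun ω => (W ω, Z ω)) (w, z) := by
  unfold pr
  rw [Finset.sum_comm]
  refine Finset.sum_congr rfl fun ω _ => ?_
  simp only [Prod.mk.injEq]
  by_cases hz : Z ω = z <;> simp [hz]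

lemma pr_marginal_fst (W : Ω → 𝒲) (Z : Ω → 𝒵) (w : 𝒲) :
    pr p W w = ∑ z, pr p (fun ω => (W ω, Z ω)) (w, z) := by
  unfold pr
  rw [Finset.sum_comm]
  refine Finset.sum_congr rfl fun ω _ => ?_
  simp only [Prod.mk.injEq]
  by_cases hw : W ω = w <;> simp [hw]

lemma H_comp_inj (p : Ω → ℝ) (Z : Ω → 𝒵) (g : 𝒵 → 𝒲) (hg : Function.Injective g) :
    H p (fun ω => g (Z ω)) = H p Z := by
  have key : ∀ z, pr p (fun ω => g (Z ω)) (g z) = pr p Z z := by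
    intro z
    refine Finset.sum_congr rfl fun ω _ => by simp [hg.eq_iff]
  have zero : ∀ w, w ∉ Finset.univ.image g → pr p (fun ω => g (Z ω)) w = 0 := by
    intro w hw
    refine Finset.sum_eq_zero fun ω _ => ?_
    have : g (Z ω) ≠ w := fun h => hw (Finset.mem_image.2 ⟨Z ω, Finset.mem_univ _, h⟩)
    simp [this]
  unfold H
  congr 1
  rw [← Finset.sum_subset (Finset.subset_univ (Finset.univ.image g))
    (fun w _ hw => by simp [zero w hw]),
    Finset.sum_image (fun a _ b _ h => hg h)]
  exact Finset.sum_congr rfl fun z _ => by rw [key]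

end Aux

section Aux2
variable {Ω 𝒲 𝒵 : Type*} [Fintype Ω] [Fintype 𝒲] [DecidableEq 𝒲]
  [Fintype 𝒵] [DecidableEq 𝒵] {p : Ω → ℝ}

/-- If `W` is determined by `Z` on the support, then `H(W,Z) = H(Z)`. -/
lemma H_pair_of_det (h0 : ∀ ω, 0 ≤ p ω) {W : Ω → 𝒲} {Z : Ω → 𝒵}
    (hdet : ∀ ω ω', 0 < p ω → 0 < p ω' → Z ω = Z ω' → W ω = W ω') :
    H p (fun ω => (W ω, Z ω)) = H p Z := by
  unfold H
  congr 1
  rw [Fintype.sum_prod_type, Finset.sum_comm]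
  refine Finset.sum_congr rfl fun z _ => ?_
  have hmarg : pr p Z z = ∑ w, pr p (fun ω => (W ω, Z ω)) (w, z) := pr_marginal_snd W Z z
  have hanonneg : ∀ w, 0 ≤ pr p (fun ω => (W ω, Z ω)) (w, z) := fun w => pr_nonneg h0 _ _
  rcases eq_or_lt_of_le (pr_nonneg h0 Z z) with hz | hz
  · have hall : ∀ w ∈ Finset.univ, pr p (fun ω => (W ω, Z ω)) (w, z) = 0 :=
      (Finset.sum_eq_zero_iff_of_nonneg (fun w _ => hanonneg w)).1 (by rw [← hmarg, ← hz])
    rw [← hz]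
    simp only [Real.logb_zero, mul_zero]
    exact Finset.sum_eq_zero fun w hw => by rw [hall w hw]; simp
  · obtain ⟨ω0, -, hω0⟩ := Finset.exists_ne_zero_of_sum_ne_zero (ne_of_gt hz)
    have hZω0 : Z ω0 = z := by by_contra h; simp [h] at hω0
    have hpω0 : 0 < p ω0 := lt_of_le_of_ne (h0 ω0) (by simp [hZω0] at hω0; exact Ne.symm hω0)
    have hoff : ∀ w, w ≠ W ω0 → pr p (fun ω => (W ω, Z ω)) (w, z) = 0 := by
      intro w hw
      refine Finset.sum_eq_zero fun ω _ => ?_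
      by_cases hc : (W ω, Z ω) = (w, z)
      · have hWω : W ω = w := congrArg Prod.fst hc
        have hZω : Z ω = z := congrArg Prod.snd hc
        rw [if_pos hc]
        by_contra hne
        have hpω : 0 < p ω := lt_of_le_of_ne (h0 ω) (Ne.symm hne)
        exact hw (hWω ▸ hdet ω ω0 hpω hpω0 (hZω.trans hZω0.symm))
      · simp [hc]
    have hon : pr p (fun ω => (W ω, Z ω)) (W ω0, z) = pr p Z z := by
      rw [hmarg, Finset.sum_eq_single (W ω0)]
      · exact fun w _ hw => hoff w hw
      · simp
    have heq : ∀ w : 𝒲, pr p (fun ω => (W ω, Z ω)) (w, z)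
        * Real.logb 2 (pr p (fun ω => (W ω, Z ω)) (w, z))
        = if w = W ω0 then pr p Z z * Real.logb 2 (pr p Z z) else 0 := by
      intro w
      by_cases hw : w = W ω0
      · rw [hw, hon, if_pos rfl]
      · rw [hoff w hw, if_neg hw]; simp
    rw [Finset.sum_congr rfl fun w _ => heq w]
    simp

/-- `H(W) ≤ H(W,Z)`. -/
lemma H_le_H_pair (h0 : ∀ ω, 0 ≤ p ω) (W : Ω → 𝒲) (Z : Ω → 𝒵) :
    H p W ≤ H p (fun ω => (W ω, Z ω)) := by
  unfold H
  rw [Fintype.sum_prod_type, neg_le_neg_iff]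
  refine Finset.sum_le_sum fun w _ => ?_
  have hmarg : pr p W w = ∑ z, pr p (fun ω => (W ω, Z ω)) (w, z) := pr_marginal_fst W Z w
  have hanonneg : ∀ z, 0 ≤ pr p (fun ω => (W ω, Z ω)) (w, z) := fun z => pr_nonneg h0 _ _
  have hle : ∀ z, pr p (fun ω => (W ω, Z ω)) (w, z) ≤ pr p W w := fun z => by
    rw [hmarg]; exact Finset.single_le_sum (fun z _ => hanonneg z) (Finset.mem_univ z)
  calc ∑ z, pr p (fun ω => (W ω, Z ω)) (w, z)
          * Real.logb 2 (pr p (fun ω => (W ω, Z ω)) (w, z))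
      ≤ ∑ z, pr p (fun ω => (W ω, Z ω)) (w, z) * Real.logb 2 (pr p W w) := by
        refine Finset.sum_le_sum fun z _ => ?_
        rcases eq_or_lt_of_le (hanonneg z) with h | h
        · simp [← h]
        · exact mul_le_mul_of_nonneg_left
            ((Real.logb_le_logb one_lt_two h (lt_of_lt_of_le h (hle z))).2 (hle z)) (le_of_lt h)
    _ = pr p W w * Real.logb 2 (pr p W w) := by rw [← Finset.sum_mul, ← hmarg]

/-- Equality `H(W,Z) = H(Z)` forces `W` to be determined by `Z` on the support. -/
lemma det_of_H_pair_eq (h0 : ∀ ω, 0 ≤ p ω) {W : Ω → 𝒲} {Z : Ω → 𝒵}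
    (hH : H p (fun ω => (W ω, Z ω)) = H p Z) :
    ∀ ω ω', 0 < p ω → 0 < p ω' → Z ω = Z ω' → W ω = W ω' := by
  have hanonneg : ∀ w z, 0 ≤ pr p (fun ω => (W ω, Z ω)) (w, z) := fun w z => pr_nonneg h0 _ _
  have hmarg : ∀ z, pr p Z z = ∑ w, pr p (fun ω => (W ω, Z ω)) (w, z) :=
    fun z => pr_marginal_snd W Z z
  have hle : ∀ w z, pr p (fun ω => (W ω, Z ω)) (w, z) ≤ pr p Z z := fun w z => by
    rw [hmarg]; exact Finset.single_le_sum (fun w _ => hanonneg w z) (Finset.mem_univ w)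
  have hterm : ∀ w z, 0 ≤ pr p (fun ω => (W ω, Z ω)) (w, z) * Real.logb 2 (pr p Z z)
      - pr p (fun ω => (W ω, Z ω)) (w, z)
        * Real.logb 2 (pr p (fun ω => (W ω, Z ω)) (w, z)) := by
    intro w z
    rcases eq_or_lt_of_le (hanonneg w z) with h | h
    · simp [← h]
    · have := mul_le_mul_of_nonneg_left
        ((Real.logb_le_logb one_lt_two h (lt_of_lt_of_le h (hle w z))).2 (hle w z)) (le_of_lt h)
      linarith
  have e1 : H p (fun ω => (W ω, Z ω)) = -∑ z, ∑ w, pr p (fun ω => (W ω, Z ω)) (w, z)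
      * Real.logb 2 (pr p (fun ω => (W ω, Z ω)) (w, z)) := by
    unfold H; rw [Fintype.sum_prod_type, Finset.sum_comm]
  have hsum : ∑ z, ∑ w, (pr p (fun ω => (W ω, Z ω)) (w, z) * Real.logb 2 (pr p Z z)
      - pr p (fun ω => (W ω, Z ω)) (w, z)
        * Real.logb 2 (pr p (fun ω => (W ω, Z ω)) (w, z))) = 0 := by
    have expand : ∑ z, ∑ w, (pr p (fun ω => (W ω, Z ω)) (w, z) * Real.logb 2 (pr p Z z)
        - pr p (fun ω => (W ω, Z ω)) (w, z)
          * Real.logb 2 (pr p (fun ω => (W ω, Z ω)) (w, z)))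
        = ∑ z, (pr p Z z * Real.logb 2 (pr p Z z))
          - ∑ z, ∑ w, pr p (fun ω => (W ω, Z ω)) (w, z)
            * Real.logb 2 (pr p (fun ω => (W ω, Z ω)) (w, z)) := by
      rw [← Finset.sum_sub_distrib]
      refine Finset.sum_congr rfl fun z _ => ?_
      rw [Finset.sum_sub_distrib, ← Finset.sum_mul, ← hmarg]
    rw [expand]
    rw [e1] at hH
    unfold H at hH
    linarith
  have hzero : ∀ z w, pr p (fun ω => (W ω, Z ω)) (w, z) * Real.logb 2 (pr p Z z)
      - pr p (fun ω => (W ω, Z ω)) (w, z)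
        * Real.logb 2 (pr p (fun ω => (W ω, Z ω)) (w, z)) = 0 := by
    intro z w
    have h1 := (Finset.sum_eq_zero_iff_of_nonneg
      (fun z _ => Finset.sum_nonneg fun w _ => hterm w z)).1 hsum z (Finset.mem_univ z)
    exact (Finset.sum_eq_zero_iff_of_nonneg (fun w _ => hterm w z)).1 h1 w (Finset.mem_univ w)
  have hfull : ∀ w z, 0 < pr p (fun ω => (W ω, Z ω)) (w, z) →
      pr p (fun ω => (W ω, Z ω)) (w, z) = pr p Z z := by
    intro w z hpos
    by_contra hne
    have hlt : pr p (fun ω => (W ω, Z ω)) (w, z) < pr p Z z := lt_of_le_of_ne (hle w z) hne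
    have := Real.logb_lt_logb one_lt_two hpos hlt
    have h2 := hzero z w
    nlinarith
  intro ω ω' hω hω' hZ
  by_contra hne
  have h1 : p ω ≤ pr p (fun ω => (W ω, Z ω)) (W ω, Z ω) :=
    le_pr h0 (fun ω => (W ω, Z ω)) (ω := ω)
  have h2 : p ω' ≤ pr p (fun ω => (W ω, Z ω)) (W ω', Z ω) := by
    have := le_pr h0 (fun ω => (W ω, Z ω)) (ω := ω'); rw [← hZ] at this; exact this
  have e1' : pr p (fun ω => (W ω, Z ω)) (W ω, Z ω) = pr p Z (Z ω) :=
    hfull _ _ (lt_of_lt_of_le hω h1)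
  have e2' : pr p (fun ω => (W ω, Z ω)) (W ω', Z ω) = pr p Z (Z ω) :=
    hfull _ _ (lt_of_lt_of_le hω' h2)
  have hsum2 : pr p (fun ω => (W ω, Z ω)) (W ω, Z ω)
      + pr p (fun ω => (W ω, Z ω)) (W ω', Z ω) ≤ pr p Z (Z ω) := by
    rw [hmarg]
    rw [← Finset.add_sum_erase Finset.univ _ (Finset.mem_univ (W ω))]
    have : pr p (fun ω => (W ω, Z ω)) (W ω', Z ω)
        ≤ ∑ w ∈ Finset.univ.erase (W ω), pr p (fun ω => (W ω, Z ω)) (w, Z ω) :=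
      Finset.single_le_sum (fun w _ => hanonneg w (Z ω))
        (Finset.mem_erase.2 ⟨Ne.symm hne, Finset.mem_univ _⟩)
    linarith
  have hposZ : 0 < pr p Z (Z ω) := lt_of_lt_of_le hω (le_trans h1 (hle _ _))
  linarith

end Aux2

noncomputable def GKrep {𝒳 : Type*} (r : 𝒳 → 𝒳 → Prop) (x : 𝒳) : 𝒳 :=
  @Quotient.out _ (Relation.EqvGen.setoid r) (@Quotient.mk _ (Relation.EqvGen.setoid r) x)

lemma GKrep_eq_iff {𝒳 : Type*} (r : 𝒳 → 𝒳 → Prop) (x x' : 𝒳) :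
    GKrep r x = GKrep r x' ↔ Relation.EqvGen r x x' := by
  constructor
  · intro h
    have h1 := @Quotient.mk_out _ (Relation.EqvGen.setoid r) x
    have h2 := @Quotient.mk_out _ (Relation.EqvGen.setoid r) x'
    rw [show (@Quotient.mk _ (Relation.EqvGen.setoid r) x).out = GKrep r x from rfl, h] at h1
    exact (Relation.EqvGen.setoid r).iseqv.trans ((Relation.EqvGen.setoid r).iseqv.symm h1) h2
  · intro h
    unfold GKrep
    congr 1
    exact Quotient.sound h

lemma pr_pos_witness {Ω 𝒵 : Type*} [Fintype Ω] [DecidableEq 𝒵] {p : Ω → ℝ}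
    (h0 : ∀ ω, 0 ≤ p ω) {Z : Ω → 𝒵} {z : 𝒵} (h : 0 < pr p Z z) :
    ∃ ω, 0 < p ω ∧ Z ω = z := by
  obtain ⟨ω, -, hω⟩ := Finset.exists_ne_zero_of_sum_ne_zero (ne_of_gt h)
  have hz : Z ω = z := by by_contra hc; simp [hc] at hω
  refine ⟨ω, lt_of_le_of_ne (h0 ω) ?_, hz⟩
  simp [hz] at hω
  exact Ne.symm hω

/-- Along a chain of the characteristic bipartite graph, any common function of `X` and `Y`
is constant on the support. -/
lemma GK_chain {Ω 𝒳 𝒴 : Type*} {𝒬 : Type} [Fintype Ω] [DecidableEq 𝒳] [DecidableEq 𝒴]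
    {p : Ω → ℝ} (h0 : ∀ ω, 0 ≤ p ω) (X : Ω → 𝒳) (Y : Ω → 𝒴) (Q : Ω → 𝒬)
    (hdX : ∀ ω ω', 0 < p ω → 0 < p ω' → X ω = X ω' → Q ω = Q ω')
    (hdY : ∀ ω ω', 0 < p ω → 0 < p ω' → Y ω = Y ω' → Q ω = Q ω')
    {x x' : 𝒳}
    (h : Relation.EqvGen (fun a b => ∃ y, 0 < pr p (fun ω => (X ω, Y ω)) (a, y) ∧
      0 < pr p (fun ω => (X ω, Y ω)) (b, y)) x x') :
    x = x' ∨ ((∃ ω, 0 < p ω ∧ X ω = x) ∧ (∃ ω, 0 < p ω ∧ X ω = x') ∧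
      ∀ ω ω', 0 < p ω → 0 < p ω' → X ω = x → X ω' = x' → Q ω = Q ω') := by
  induction h with
  | rel a b hab =>
    obtain ⟨y, h1, h2⟩ := hab
    obtain ⟨ω1, hp1, hZ1⟩ := pr_pos_witness h0 h1
    obtain ⟨ω2, hp2, hZ2⟩ := pr_pos_witness h0 h2
    have hX1 : X ω1 = a := congrArg Prod.fst hZ1
    have hY1 : Y ω1 = y := congrArg Prod.snd hZ1
    have hX2 : X ω2 = b := congrArg Prod.fst hZ2
    have hY2 : Y ω2 = y := congrArg Prod.snd hZ2
    right
    exact ⟨⟨ω1, hp1, hX1⟩, ⟨ω2, hp2, hX2⟩, fun ω ω' hω hω' hXa hXb =>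
      ((hdX ω ω1 hω hp1 (hXa.trans hX1.symm)).trans
        (hdY ω1 ω2 hp1 hp2 (hY1.trans hY2.symm))).trans
        (hdX ω2 ω' hp2 hω' (hX2.trans hXb.symm))⟩
  | refl a => left; rfl
  | symm a b hab ih =>
    rcases ih with h | ⟨ha, hb, hq⟩
    · left; exact h.symm
    · right; exact ⟨hb, ha, fun ω ω' hω hω' h1 h2 => (hq ω' ω hω' hω h2 h1).symm⟩
  | trans a b c hab hbc ih1 ih2 =>
    rcases ih1 with h1 | ⟨ha, hb, hq1⟩
    · rcases ih2 with h2 | hr2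
      · left; exact h1.trans h2
      · right; rw [h1]; exact hr2
    · rcases ih2 with h2 | ⟨hb2, hc, hq2⟩
      · right; rw [← h2]; exact ⟨ha, hb, hq1⟩
      · right
        obtain ⟨ωb, hpb, hXb⟩ := hb
        exact ⟨ha, hc, fun ω ω' hω hω' hXa hXc =>
          (hq1 ω ωb hω hpb hXa hXb).trans (hq2 ωb ω' hpb hω' hXb hXc)⟩

/-- the Gacs-Korner common information is attained by a maximal common
random variable Q* (a deterministic function of X and of Y, representable with
alphabet 𝒳, maximizing entropy among all common functions), and the identity
I(X;Y) = H(Q*) + I(X;Y|Q*) holds. -/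
theorem GK_maximal_common_rv {Ω 𝒳 𝒴 : Type*} [Fintype Ω]
    [Fintype 𝒳] [DecidableEq 𝒳] [Fintype 𝒴] [DecidableEq 𝒴]
    (p : Ω → ℝ) (X : Ω → 𝒳) (Y : Ω → 𝒴) (hp : IsPMF p) :
    ∃ Qs : Ω → 𝒳,
      condH p Qs X = 0 ∧ condH p Qs Y = 0 ∧
      (∀ (𝒬 : Type) [Fintype 𝒬] [DecidableEq 𝒬] (Q : Ω → 𝒬),
        condH p Q X = 0 → condH p Q Y = 0 → H p Q ≤ H p Qs) ∧
      MI p X Y = H p Qs + condMI p X Y Qs := by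
  obtain ⟨h0, hsum1⟩ := hp
  classical
  set step : 𝒳 → 𝒳 → Prop := fun a b => ∃ y, 0 < pr p (fun ω => (X ω, Y ω)) (a, y) ∧
    0 < pr p (fun ω => (X ω, Y ω)) (b, y) with hstep
  set rep : 𝒳 → 𝒳 := GKrep step with hrep
  have hYdet : ∀ ω ω', 0 < p ω → 0 < p ω' → Y ω = Y ω' → rep (X ω) = rep (X ω') := by
    intro ω ω' hω hω' hY
    refine (GKrep_eq_iff step _ _).2 (Relation.EqvGen.rel _ _ ⟨Y ω, ?_, ?_⟩)
    · exact lt_of_lt_of_le hω (le_pr h0 (fun ω => (X ω, Y ω)) (ω := ω))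
    · have := lt_of_lt_of_le hω' (le_pr h0 (fun ω => (X ω, Y ω)) (ω := ω'))
      rw [hY]; exact this
  refine ⟨fun ω => rep (X ω), ?_, ?_, ?_, ?_⟩
  · -- condH p Qs X = 0
    have e : H p (fun ω => (rep (X ω), X ω)) = H p X :=
      H_comp_inj p X (fun x => (rep x, x)) (fun a b h => congrArg Prod.snd h)
    show H p (fun ω => (rep (X ω), X ω)) - H p X = 0
    rw [e, sub_self]
  · -- condH p Qs Y = 0
    have e : H p (fun ω => (rep (X ω), Y ω)) = H p Y := H_pair_of_det h0 hYdet
    show H p (fun ω => (rep (X ω), Y ω)) - H p Y = 0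
    rw [e, sub_self]
  · -- maximality
    intro 𝒬 _i1 _i2 Q hQX hQY
    have hX' : H p (fun ω => (Q ω, X ω)) = H p X := by
      have : H p (fun ω => (Q ω, X ω)) - H p X = 0 := hQX
      linarith
    have hY' : H p (fun ω => (Q ω, Y ω)) = H p Y := by
      have : H p (fun ω => (Q ω, Y ω)) - H p Y = 0 := hQY
      linarith
    have hdX := det_of_H_pair_eq h0 hX'
    have hdY := det_of_H_pair_eq h0 hY'
    have key : ∀ ω ω', 0 < p ω → 0 < p ω' → rep (X ω) = rep (X ω') → Q ω = Q ω' := by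
      intro ω ω' hω hω' hr
      have hE := (GKrep_eq_iff step _ _).1 hr
      rcases GK_chain h0 X Y Q hdX hdY hE with heq | ⟨-, -, hq⟩
      · exact hdX ω ω' hω hω' heq
      · exact hq ω ω' hω hω' rfl rfl
    calc H p Q ≤ H p (fun ω => (Q ω, rep (X ω))) := H_le_H_pair h0 Q (fun ω => rep (X ω))
      _ = H p (fun ω => rep (X ω)) := H_pair_of_det h0 key
  · -- the identity
    have e1 : H p (fun ω => (X ω, rep (X ω))) = H p X :=
      H_comp_inj p X (fun x => (x, rep x)) (fun a b h => congrArg Prod.fst h)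
    have e2 : H p (fun ω => (X ω, (Y ω, rep (X ω)))) = H p (fun ω => (X ω, Y ω)) :=
      H_comp_inj p (fun ω => (X ω, Y ω)) (fun q => (q.1, (q.2, rep q.1)))
        (fun a b h => by
          simp only [Prod.mk.injEq] at h
          exact Prod.ext h.1 h.2.1)
    have e3 : H p (fun ω => (Y ω, rep (X ω))) = H p Y := by
      have hswap : H p (fun ω => (Y ω, rep (X ω))) = H p (fun ω => (rep (X ω), Y ω)) :=
        H_comp_inj p (fun ω => (rep (X ω), Y ω)) Prod.swap Prod.swap_injective
      rw [hswap]
      exact H_pair_of_det h0 hYdet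
    show H p X + H p Y - H p (fun ω => (X ω, Y ω)) =
      H p (fun ω => rep (X ω)) +
        ((H p (fun ω => (X ω, rep (X ω))) - H p (fun ω => rep (X ω))) -
         (H p (fun ω => (X ω, (Y ω, rep (X ω)))) - H p (fun ω => (Y ω, rep (X ω)))))
    rw [e1, e2, e3]
    ring
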